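/- arXiv:2301.13292 — 5 statements merged into one kernel-verified Lean document; each statement's English description precedes it below -/
import Mathlib

section
/- The function P(x, y) = -ln(F(x) - F(y)) is strictly convex on the open half-plane {(x, y) ∈ ℝ² : x > y}. -/
open Real MeasureTheory intervalIntegral Set

/-- The Gaussian error function `F(z) = (1/√(2π)) ∫_{-∞}^z e^{-s²/2} ds`. -/
noncomputable def F (z : ℝ) : ℝ :=
  (1 / Real.sqrt (2 * Real.pi)) * ∫ s in Set.Iic z, Real.exp (-s ^ 2 / 2)

noncomputable def gpdf (s : ℝ) : ℝ := (1 / Real.sqrt (2 * Real.pi)) * Real.exp (-s ^ 2 / 2)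

lemma gpdf_pos (s : ℝ) : 0 < gpdf s := by
  have h : 0 < Real.sqrt (2 * Real.pi) := Real.sqrt_pos.2 (by positivity)
  exact mul_pos (by positivity) (Real.exp_pos _)

lemma integrable_g : MeasureTheory.Integrable (fun s : ℝ => Real.exp (-s ^ 2 / 2)) := by
  have := integrable_exp_neg_mul_sq (b := (1/2 : ℝ)) (by norm_num)
  convert this using 2 with s
  ring_nf

lemma F_sub (a b : ℝ) : F b - F a = ∫ s in a..b, gpdf s := by
  unfold F gpdf
  rw [← mul_sub, integral_Iic_sub_Iic integrable_g.integrableOn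
    integrable_g.integrableOn, intervalIntegral.integral_const_mul]

lemma hasDerivAt_F (z : ℝ) : HasDerivAt F (gpdf z) z := by
  have h : ∀ w, F w = F 0 + ∫ s in (0:ℝ)..w, gpdf s := by
    intro w; rw [← F_sub]; ring
  have hc : Continuous gpdf := by
    unfold gpdf; fun_prop
  have := (intervalIntegral.integral_hasDerivAt_right
    (f := gpdf) (a := 0) (b := z) (hc.intervalIntegrable _ _)
    hc.aestronglyMeasurable.stronglyMeasurableAtFilter hc.continuousAt)
  have h2 := this.const_add (F 0)
  exact h2.congr_of_eventuallyEq (Filter.Eventually.of_forall fun w => (h w))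

lemma hasDerivAt_gpdf (z : ℝ) : HasDerivAt gpdf (-z * gpdf z) z := by
  unfold gpdf
  have h1 : HasDerivAt (fun s : ℝ => -s ^ 2 / 2) (-z) z := by
    have := ((hasDerivAt_pow 2 z).neg).div_const 2
    simpa using this.congr_deriv (by ring)
  have := (h1.exp).const_mul (1 / Real.sqrt (2 * Real.pi))
  refine this.congr_deriv ?_
  ring

/-- `∫_a^b (-s) gpdf s ds = gpdf b - gpdf a`. -/
lemma integral_neg_mul_gpdf (a b : ℝ) :
    ∫ s in a..b, -s * gpdf s = gpdf b - gpdf a := by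
  apply intervalIntegral.integral_eq_sub_of_hasDerivAt
  · exact fun s _ => hasDerivAt_gpdf s
  · apply Continuous.intervalIntegrable
    unfold gpdf; fun_prop

/-- C > 0 : `gpdf y - y * ∫_y^x gpdf > 0` for y < x. -/
lemma C_pos {x y : ℝ} (h : y < x) : 0 < gpdf y - y * ∫ s in y..x, gpdf s := by
  have key : y * ∫ s in y..x, gpdf s ≤ ∫ s in y..x, s * gpdf s := by
    rw [← intervalIntegral.integral_const_mul]
    apply intervalIntegral.integral_mono_on h.le
    · apply Continuous.intervalIntegrable; unfold gpdf; fun_prop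
    · apply Continuous.intervalIntegrable; unfold gpdf; fun_prop
    · intro s hs
      exact mul_le_mul_of_nonneg_right hs.1 (gpdf_pos s).le
  have h2 : ∫ s in y..x, s * gpdf s = gpdf y - gpdf x := by
    have h3 := integral_neg_mul_gpdf y x
    have h4 : ∫ s in y..x, s * gpdf s = -∫ s in y..x, -s * gpdf s := by
      rw [← intervalIntegral.integral_neg]
      apply intervalIntegral.integral_congr; intro s _; ring
    rw [h4, h3]; ring
  rw [h2] at key
  have := gpdf_pos x
  linarith

/-- A > 0 : `gpdf x + x * ∫_y^x gpdf > 0` for y < x. -/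
lemma A_pos {x y : ℝ} (h : y < x) : 0 < gpdf x + x * ∫ s in y..x, gpdf s := by
  have key : ∫ s in y..x, -x * gpdf s ≤ ∫ s in y..x, -s * gpdf s := by
    apply intervalIntegral.integral_mono_on h.le
    · apply Continuous.intervalIntegrable; unfold gpdf; fun_prop
    · apply Continuous.intervalIntegrable; unfold gpdf; fun_prop
    · intro s hs
      exact mul_le_mul_of_nonneg_right (neg_le_neg hs.2) (gpdf_pos s).le
  rw [integral_neg_mul_gpdf, intervalIntegral.integral_const_mul] at key
  have := gpdf_pos y
  nlinarith [key]

/-- D > 0 : determinant-type inequality. -/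
lemma D_pos {x y : ℝ} (h : y < x) :
    0 < x * gpdf y - y * gpdf x - x * y * ∫ s in y..x, gpdf s := by
  set h0 : ℝ → ℝ := fun w => w * gpdf y - y * gpdf w - w * y * (F w - F y) with hh0
  have hd : ∀ w, HasDerivAt h0 (gpdf y - y * (F w - F y)) w := by
    intro w
    have d1 : HasDerivAt (fun w : ℝ => w * gpdf y) (gpdf y) w := by
      simpa using (hasDerivAt_id w).mul_const (gpdf y)
    have d2 : HasDerivAt (fun w : ℝ => y * gpdf w) (y * (-w * gpdf w)) w :=
      (hasDerivAt_gpdf w).const_mul y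
    have d3 : HasDerivAt (fun w : ℝ => w * y * (F w - F y)) 
        (y * (F w - F y) + w * y * gpdf w) w := by
      have := (((hasDerivAt_id w).mul_const y).mul ((hasDerivAt_F w).sub_const (F y)))
      refine this.congr_deriv ?_; simp only [id_eq]; ring
    have := (d1.sub d2).sub d3
    refine this.congr_deriv ?_; ring
  have hmono : StrictMonoOn h0 (Set.Ici y) := by
    apply strictMonoOn_of_deriv_pos (convex_Ici y)
    · exact fun w _ => ((hd w).continuousAt).continuousWithinAt
    · intro w hw
      rw [interior_Ici] at hw
      rw [(hd w).deriv, F_sub]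
      linarith [C_pos hw]
  have h1 : h0 y = 0 := by simp [hh0]
  have h2 : h0 x = x * gpdf y - y * gpdf x - x * y * ∫ s in y..x, gpdf s := by
    rw [hh0]; simp only; rw [F_sub]
  have := hmono (Set.self_mem_Ici) (le_of_lt h : y ≤ x) h
  rw [h1, h2] at this
  linarith

/-- Positivity of the quadratic form. -/
lemma quad_pos {x y u v : ℝ} (h : y < x) (huv : u ≠ 0 ∨ v ≠ 0) :
    0 < (gpdf x ^ 2 + x * gpdf x * ∫ s in y..x, gpdf s) * u ^ 2
      - 2 * (gpdf x * gpdf y) * u * v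
      + (gpdf y ^ 2 - y * gpdf y * ∫ s in y..x, gpdf s) * v ^ 2 := by
  set G := ∫ s in y..x, gpdf s with hG
  have hGpos : 0 < G := by
    rw [hG]
    apply intervalIntegral.intervalIntegral_pos_of_pos_on
    · apply Continuous.intervalIntegrable; unfold gpdf; fun_prop
    · exact fun s _ => gpdf_pos s
    · exact h
  have hA : 0 < gpdf x ^ 2 + x * gpdf x * G := by
    have := A_pos h; have := gpdf_pos x; nlinarith
  have hC : 0 < gpdf y ^ 2 - y * gpdf y * G := by
    have := C_pos h; have := gpdf_pos y; nlinarith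
  have hD : 0 < x * gpdf y - y * gpdf x - x * y * G := D_pos h
  have hdet : (gpdf x * gpdf y) ^ 2 <
      (gpdf x ^ 2 + x * gpdf x * G) * (gpdf y ^ 2 - y * gpdf y * G) := by
    have := gpdf_pos x; have := gpdf_pos y
    nlinarith [mul_pos (mul_pos (mul_pos this ‹0 < gpdf y›) hGpos) hD]
  rcases eq_or_ne v 0 with rfl | hv
  · have hu : u ≠ 0 := by tauto
    have := sq_pos_of_ne_zero hu
    nlinarith
  · nlinarith [sq_nonneg ((gpdf x ^ 2 + x * gpdf x * G) * u - (gpdf x * gpdf y) * v), sq_pos_of_ne_zero hv]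

lemma G_pos {x y : ℝ} (h : y < x) : 0 < F x - F y := by
  rw [F_sub]
  apply intervalIntegral.intervalIntegral_pos_of_pos_on
  · apply Continuous.intervalIntegrable; unfold gpdf; fun_prop
  · exact fun s _ => gpdf_pos s
  · exact h

theorem strictConvexOn_neg_log_F_diff :
    StrictConvexOn ℝ {p : ℝ × ℝ | p.2 < p.1}
      (fun p : ℝ × ℝ => -Real.log (F p.1 - F p.2)) := by
  constructor
  · intro w hw z hz a b ha hb hab
    simp only [Set.mem_setOf_eq] at *
    simp only [Prod.fst_add, Prod.snd_add, Prod.smul_fst, Prod.smul_snd, smul_eq_mul]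
    rcases ha.lt_or_eq with ha' | ha'
    · nlinarith [mul_lt_mul_of_pos_left hw ha', mul_le_mul_of_nonneg_left hz.le hb]
    · have hb1 : b = 1 := by linarith
      rw [← ha', hb1]; simpa using hz
  intro p hp q hq hpq a b ha hb hab
  simp only [Set.mem_setOf_eq] at hp hq
  set u := q.1 - p.1 with hu
  set v := q.2 - p.2 with hv
  have huv : u ≠ 0 ∨ v ≠ 0 := by
    by_contra hcon
    push_neg at hcon
    apply hpq
    have : q.1 = p.1 := by have := hcon.1; rw [hu] at this; linarith
    have h2 : q.2 = p.2 := by have := hcon.2; rw [hv] at this; linarith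
    exact Prod.ext this.symm h2.symm
  set xt : ℝ → ℝ := fun t => p.1 + t * u with hxt
  set yt : ℝ → ℝ := fun t => p.2 + t * v with hyt
  set T : Set ℝ := {t | yt t < xt t} with hT
  have hTopen : IsOpen T := by
    have : Continuous fun t => xt t - yt t := by fun_prop
    have : T = (fun t => xt t - yt t) ⁻¹' Set.Ioi 0 := by
      ext t; simp [hT, sub_pos]
    rw [this]
    exact (by fun_prop : Continuous fun t => xt t - yt t).isOpen_preimage _ isOpen_Ioi
  have hIccT : Set.Icc (0:ℝ) 1 ⊆ T := by
    intro t ht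
    simp only [hT, Set.mem_setOf_eq, hxt, hyt, hu, hv]
    have h1 := ht.1; have h2 := ht.2
    rcases lt_or_ge t 1 with h3 | h3
    · nlinarith [mul_pos (by linarith : (0:ℝ) < 1 - t) (by linarith : (0:ℝ) < p.1 - p.2),
        mul_nonneg h1 (by linarith : (0:ℝ) ≤ q.1 - q.2)]
    · have ht1 : t = 1 := le_antisymm h2 h3
      rw [ht1]; simp; linarith
  set g : ℝ → ℝ := fun t => -Real.log (F (xt t) - F (yt t)) with hg
  set g1 : ℝ → ℝ := fun t =>
    -(u * gpdf (xt t) - v * gpdf (yt t)) / (F (xt t) - F (yt t)) with hg1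
  have hxd : ∀ t, HasDerivAt xt u t := by
    intro t
    simpa [hxt] using ((hasDerivAt_id t).mul_const u).const_add p.1
  have hyd : ∀ t, HasDerivAt yt v t := by
    intro t
    simpa [hyt] using ((hasDerivAt_id t).mul_const v).const_add p.2
  have hGd : ∀ t, HasDerivAt (fun t => F (xt t) - F (yt t))
      (u * gpdf (xt t) - v * gpdf (yt t)) t := by
    intro t
    have h1 := (hasDerivAt_F (xt t)).comp t (hxd t)
    have h2 := (hasDerivAt_F (yt t)).comp t (hyd t)
    have := h1.sub h2
    refine this.congr_deriv ?_; ring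
  have hgd : ∀ t ∈ T, HasDerivAt g (g1 t) t := by
    intro t ht
    have hGpos : 0 < F (xt t) - F (yt t) := G_pos ht
    have hlog := (Real.hasDerivAt_log hGpos.ne').comp t (hGd t)
    have := hlog.neg
    refine this.congr_deriv ?_
    simp [hg1]; ring
  have hg1d : ∀ t ∈ T, HasDerivAt g1
      (((u * gpdf (xt t) - v * gpdf (yt t)) ^ 2
        - (-(u ^ 2 * xt t * gpdf (xt t)) + v ^ 2 * yt t * gpdf (yt t))
          * (F (xt t) - F (yt t))) / (F (xt t) - F (yt t)) ^ 2) t := by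
    intro t ht
    have hGpos : 0 < F (xt t) - F (yt t) := G_pos ht
    have hNd : HasDerivAt (fun t => u * gpdf (xt t) - v * gpdf (yt t))
        (-(u ^ 2 * xt t * gpdf (xt t)) + v ^ 2 * yt t * gpdf (yt t)) t := by
      have h1 := ((hasDerivAt_gpdf (xt t)).comp t (hxd t)).const_mul u
      have h2 := ((hasDerivAt_gpdf (yt t)).comp t (hyd t)).const_mul v
      have := h1.sub h2
      refine this.congr_deriv ?_; ring
    have := (hNd.neg.div (hGd t) hGpos.ne')
    refine this.congr_deriv ?_
    simp only [Pi.neg_apply]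
    field_simp
    ring
  have key : ∀ t ∈ Set.Ioo (0:ℝ) 1, 0 < (deriv^[2] g) t := by
    intro t ht
    have htT : t ∈ T := hIccT (Set.mem_Icc_of_Ioo ht)
    have hev : deriv g =ᶠ[nhds t] g1 := by
      filter_upwards [hTopen.mem_nhds htT] with s hs
      exact (hgd s hs).deriv
    have : (deriv^[2] g) t = deriv g1 t := by
      simp only [Function.iterate_succ, Function.iterate_zero, Function.comp_apply, id_eq]
      exact hev.deriv_eq
    rw [this, (hg1d t htT).deriv]
    have hGpos : 0 < F (xt t) - F (yt t) := G_pos htT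
    apply div_pos _ (by positivity)
    have hq := quad_pos (x := xt t) (y := yt t) (u := u) (v := v) htT huv
    rw [F_sub]
    rw [F_sub] at hGpos
    nlinarith [hq]
  have hcg : ContinuousOn g (Set.Icc 0 1) :=
    fun t ht => ((hgd t (hIccT ht)).continuousAt).continuousWithinAt
  have hsc : StrictConvexOn ℝ (Set.Icc (0:ℝ) 1) g :=
    strictConvexOn_of_deriv2_pos (convex_Icc 0 1) hcg (by rwa [interior_Icc])
  have h01 : (0:ℝ) ≠ (1:ℝ) := by norm_num
  have := hsc.2 (Set.left_mem_Icc.2 zero_le_one) (Set.right_mem_Icc.2 zero_le_one)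
    h01 ha hb hab
  simp only [smul_eq_mul, mul_zero, mul_one, zero_add] at this
  have e1 : (a • p + b • q).1 = xt b := by
    simp only [Prod.fst_add, Prod.smul_fst, smul_eq_mul, hxt]
    have : a = 1 - b := by linarith
    rw [this]; ring
  have e2 : (a • p + b • q).2 = yt b := by
    simp only [Prod.snd_add, Prod.smul_snd, smul_eq_mul, hyt]
    have : a = 1 - b := by linarith
    rw [this]; ring
  have e3 : g 0 = -Real.log (F p.1 - F p.2) := by
    rw [hg]; simp [hxt, hyt]
  have e4 : g 1 = -Real.log (F q.1 - F q.2) := by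
    rw [hg]
    have ex : xt 1 = q.1 := by rw [hxt]; simp [hu]
    have ey : yt 1 = q.2 := by rw [hyt]; simp [hv]
    simp only [ex, ey]
  show -Real.log (F (a • p + b • q).1 - F (a • p + b • q).2)
      < a • -Real.log (F p.1 - F p.2) + b • -Real.log (F q.1 - F q.2)
  rw [e1, e2, smul_eq_mul, smul_eq_mul, ← e3, ← e4]
  exact this
end

section
/- The Hessian matrix of P(x, y) = -ln(F(x) - F(y)) at any point with x > y can be written as (F(x)-F(y))^{-2}·(R₁ + F'(x)F'(y)R₂), where R₁ is a diagonal matrix with positive diagonal entries F'(x)(F(x)-F(y))(x-z) and F'(y)(F(x)-F(y))(z-y) for some z ∈ (y,x), and R₂ = [[1,-1],[-1,1]]; hence the Hessian is positive definite. -/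
/-- Its density `F'(x) = (1/√(2π)) e^{-x²/2}`. -/
noncomputable def F' (x : ℝ) : ℝ :=
  (1 / Real.sqrt (2 * Real.pi)) * Real.exp (-x ^ 2 / 2)

/-- `P(x,y) = -ln(F(x) - F(y))`. -/
noncomputable def P (x y : ℝ) : ℝ := -Real.log (F x - F y)

/-- The Hessian matrix of `P` at `(x, y)`, given by the second partial derivatives. -/
noncomputable def hessP (x y : ℝ) : Matrix (Fin 2) (Fin 2) ℝ :=
  !![deriv (fun t => deriv (fun s => P s y) t) x,
     deriv (fun s => deriv (fun t => P t s) x) y;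
     deriv (fun t => deriv (fun s => P t s) y) x,
     deriv (fun s => deriv (fun s' => P x s') s) y]

open Real MeasureTheory Set

lemma gauss_integrable : Integrable (fun s : ℝ => Real.exp (-s ^ 2 / 2)) := by
  have h := integrable_exp_neg_mul_sq (b := (1:ℝ)/2) (by norm_num)
  convert h using 2 with s
  ring_nf

lemma F'_pos (z : ℝ) : 0 < F' z := by unfold F'; positivity

lemma F_hasDeriv (z : ℝ) : HasDerivAt F (F' z) z := by
  have hcont : Continuous fun s : ℝ => Real.exp (-s ^ 2 / 2) := by continuity
  have key : ∀ w : ℝ, F w = (1 / Real.sqrt (2 * Real.pi)) *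
      ((∫ s in Set.Iic (0:ℝ), Real.exp (-s ^ 2 / 2)) + ∫ s in (0:ℝ)..w, Real.exp (-s ^ 2 / 2)) := by
    intro w
    unfold F
    congr 1
    rw [← intervalIntegral.integral_Iic_sub_Iic gauss_integrable.integrableOn
      gauss_integrable.integrableOn]
    ring
  have hI : HasDerivAt (fun w => ∫ s in (0:ℝ)..w, Real.exp (-s ^ 2 / 2))
      (Real.exp (-z ^ 2 / 2)) z :=
    intervalIntegral.integral_hasDerivAt_right gauss_integrable.intervalIntegrable
      hcont.aestronglyMeasurable.stronglyMeasurableAtFilter hcont.continuousAt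
  have := ((hI.const_add (∫ s in Set.Iic (0:ℝ), Real.exp (-s ^ 2 / 2))).const_mul
    (1 / Real.sqrt (2 * Real.pi)))
  refine HasDerivAt.congr_of_eventuallyEq ?_ (Filter.Eventually.of_forall key)
  simpa [F'] using this

lemma F'_hasDeriv (z : ℝ) : HasDerivAt F' (-z * F' z) z := by
  have h1 : HasDerivAt (fun x : ℝ => -x ^ 2 / 2) (-z) z := by
    have := ((hasDerivAt_pow 2 z).neg).div_const 2
    exact this.congr_deriv (by push_cast; ring)
  have := ((h1.exp).const_mul (1 / Real.sqrt (2 * Real.pi)))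
  unfold F'
  exact this.congr_deriv (by ring)

lemma F_sub_pos {y x : ℝ} (hxy : y < x) : 0 < F x - F y := by
  unfold F
  rw [← mul_sub, intervalIntegral.integral_Iic_sub_Iic gauss_integrable.integrableOn
    gauss_integrable.integrableOn]
  exact mul_pos (by positivity) (intervalIntegral.intervalIntegral_pos_of_pos
    gauss_integrable.intervalIntegrable (fun s => Real.exp_pos _) hxy)

lemma Px {y t : ℝ} (h : y < t) :
    HasDerivAt (fun s => P s y) (-F' t / (F t - F y)) t := by
  have := (((F_hasDeriv t).sub_const (F y)).log (F_sub_pos h).ne').neg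
  simpa [P, neg_div, Pi.neg_def] using this

lemma Py {x s : ℝ} (h : s < x) :
    HasDerivAt (fun s' => P x s') (F' s / (F x - F s)) s := by
  have := (((F_hasDeriv s).const_sub (F x)).log (F_sub_pos h).ne').neg
  simpa [P, neg_div, Pi.neg_def] using this

lemma h00 {x y : ℝ} (hxy : y < x) : deriv (fun t => deriv (fun s => P s y) t) x
    = (x * F' x * (F x - F y) + F' x ^ 2) / (F x - F y) ^ 2 := by
  have hev : (fun t => deriv (fun s => P s y) t) =ᶠ[nhds x] (fun t => -F' t / (F t - F y)) := by
    filter_upwards [Ioi_mem_nhds hxy] with t ht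
    exact (Px ht).deriv
  rw [hev.deriv_eq]
  have hnum : HasDerivAt (fun t => -F' t) (x * F' x) x := by
    simpa [Pi.neg_def] using (F'_hasDeriv x).neg
  rw [HasDerivAt.deriv (f := fun t => -F' t / (F t - F y)) (hnum.div ((F_hasDeriv x).sub_const (F y)) (F_sub_pos hxy).ne')]
  ring

lemma h01 {x y : ℝ} (hxy : y < x) : deriv (fun s => deriv (fun t => P t s) x) y
    = -(F' x * F' y) / (F x - F y) ^ 2 := by
  have hev : (fun s => deriv (fun t => P t s) x) =ᶠ[nhds y] (fun s => -F' x / (F x - F s)) := by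
    filter_upwards [Iio_mem_nhds hxy] with s hs
    exact (Px hs).deriv
  rw [hev.deriv_eq]
  rw [HasDerivAt.deriv (f := fun s => -F' x / (F x - F s)) ((hasDerivAt_const y (-F' x)).div ((F_hasDeriv y).const_sub (F x))
    (F_sub_pos hxy).ne')]
  ring

lemma h10 {x y : ℝ} (hxy : y < x) : deriv (fun t => deriv (fun s => P t s) y) x
    = -(F' x * F' y) / (F x - F y) ^ 2 := by
  have hev : (fun t => deriv (fun s => P t s) y) =ᶠ[nhds x] (fun t => F' y / (F t - F y)) := by
    filter_upwards [Ioi_mem_nhds hxy] with t ht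
    exact (Py ht).deriv
  rw [hev.deriv_eq]
  rw [HasDerivAt.deriv (f := fun t => F' y / (F t - F y)) ((hasDerivAt_const x (F' y)).div ((F_hasDeriv x).sub_const (F y))
    (F_sub_pos hxy).ne')]
  ring

lemma h11 {x y : ℝ} (hxy : y < x) : deriv (fun s => deriv (fun s' => P x s') s) y
    = (F' y ^ 2 - y * F' y * (F x - F y)) / (F x - F y) ^ 2 := by
  have hev : (fun s => deriv (fun s' => P x s') s) =ᶠ[nhds y] (fun s => F' s / (F x - F s)) := by
    filter_upwards [Iio_mem_nhds hxy] with s hs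
    exact (Py hs).deriv
  rw [hev.deriv_eq]
  rw [HasDerivAt.deriv (f := fun s => F' s / (F x - F s)) ((F'_hasDeriv y).div ((F_hasDeriv y).const_sub (F x)) (F_sub_pos hxy).ne')]
  ring

theorem hessP_decomposition_posDef (x y : ℝ) (hxy : y < x) :
    ∃ z ∈ Set.Ioo y x,
      hessP x y = ((F x - F y) ^ 2)⁻¹ •
        (Matrix.diagonal
            ![F' x * (F x - F y) * (x - z), F' y * (F x - F y) * (z - y)] +
          (F' x * F' y) • !![(1 : ℝ), -1; -1, 1]) ∧
      (∀ i, 0 < (Matrix.diagonal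
            ![F' x * (F x - F y) * (x - z), F' y * (F x - F y) * (z - y)]) i i) ∧
      (hessP x y).PosDef := by
  have hΔ := F_sub_pos hxy
  obtain ⟨z, hz, hzeq⟩ := exists_ratio_deriv_eq_ratio_slope (f := F') (g := F) hxy
    (hfc := fun t _ => (F'_hasDeriv t).continuousAt.continuousWithinAt)
    (hgc := fun t _ => (F_hasDeriv t).continuousAt.continuousWithinAt)
    (hgd := fun t ht => (F_hasDeriv t).differentiableAt.differentiableWithinAt)
    (hfd := fun t ht => (F'_hasDeriv t).differentiableAt.differentiableWithinAt)
  rw [(F'_hasDeriv z).deriv, (F_hasDeriv z).deriv] at hzeq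
  have key : F' x - F' y = -z * (F x - F y) := by
    have hz' : F' z ≠ 0 := (F'_pos z).ne'
    have : (F' x - F' y) * F' z = (-z * (F x - F y)) * F' z := by linarith [hzeq]
    exact mul_right_cancel₀ hz' this
  have hxz : 0 < x - z := sub_pos.mpr hz.2
  have hzy : 0 < z - y := sub_pos.mpr hz.1
  have hFx := F'_pos x
  have hFy := F'_pos y
  have hne : F x - F y ≠ 0 := hΔ.ne'
  have hEq : hessP x y = ((F x - F y) ^ 2)⁻¹ •
      (Matrix.diagonal
          ![F' x * (F x - F y) * (x - z), F' y * (F x - F y) * (z - y)] +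
        (F' x * F' y) • !![(1 : ℝ), -1; -1, 1]) := by
    unfold hessP
    rw [h00 hxy, h01 hxy, h10 hxy, h11 hxy]
    ext i j
    fin_cases i <;> fin_cases j <;>
      simp only [Matrix.smul_apply, Matrix.add_apply, Matrix.diagonal_apply,
        Matrix.cons_val', Matrix.cons_val_zero, Matrix.cons_val_one, Matrix.head_cons,
        Matrix.head_fin_const, Matrix.of_apply, Matrix.empty_val', Matrix.cons_val_fin_one,
        smul_eq_mul, Fin.isValue] <;>
      norm_num <;>
      field_simp
    · linear_combination key
    · linear_combination (-1) * key
  refine ⟨z, hz, hEq, fun i => ?_, ?_⟩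
  · fin_cases i <;> simp [Matrix.diagonal_apply] <;> positivity
  · have herm : (hessP x y).IsHermitian := by
      unfold Matrix.IsHermitian hessP
      rw [h01 hxy, h10 hxy]
      ext i j
      fin_cases i <;> fin_cases j <;> simp [Matrix.conjTranspose_apply]
    refine Matrix.PosDef.of_dotProduct_mulVec_pos herm (fun u hu => ?_)
    have h0 : u 0 ≠ 0 ∨ u 1 ≠ 0 := by
      by_contra h; push_neg at h
      exact hu (funext fun i => by fin_cases i <;> simp [h.1, h.2])
    rw [hEq]
    have e : dotProduct (star u) ((((F x - F y) ^ 2)⁻¹ •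
        (Matrix.diagonal
            ![F' x * (F x - F y) * (x - z), F' y * (F x - F y) * (z - y)] +
          (F' x * F' y) • !![(1 : ℝ), -1; -1, 1])).mulVec u)
        = ((F x - F y) ^ 2)⁻¹ *
          ((F' x * (F x - F y) * (x - z)) * u 0 ^ 2 +
           (F' y * (F x - F y) * (z - y)) * u 1 ^ 2 +
           (F' x * F' y) * (u 0 - u 1) ^ 2) := by
      simp [dotProduct, Matrix.mulVec, Fin.sum_univ_two, Matrix.smul_apply,
        Matrix.add_apply, Matrix.diagonal_apply]
      ring
    rw [e]
    apply mul_pos (by positivity)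
    rcases h0 with h0 | h0
    · nlinarith [sq_nonneg (u 0 - u 1), sq_nonneg (u 1), sq_pos_of_ne_zero h0,
        mul_pos (mul_pos hFx hΔ) hxz, mul_pos (mul_pos hFy hΔ) hzy, mul_pos hFx hFy]
    · nlinarith [sq_nonneg (u 0 - u 1), sq_nonneg (u 0), sq_pos_of_ne_zero h0,
        mul_pos (mul_pos hFx hΔ) hxz, mul_pos (mul_pos hFy hΔ) hzy, mul_pos hFx hFy]
end

section
/- The function x ↦ -ln F(x) is strictly convex on ℝ. -/
namespace GaussAux

open MeasureTheory Real Set Filter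

noncomputable def φ (s : ℝ) : ℝ := Real.exp (-s ^ 2 / 2)

lemma φ_pos (s : ℝ) : 0 < φ s := Real.exp_pos _

lemma φ_cont : Continuous φ := by unfold φ; fun_prop

lemma φ_integrable : Integrable φ := by
  have h := integrable_exp_neg_mul_sq (b := 1/2) (by norm_num)
  have : φ = fun x : ℝ => Real.exp (-(1/2) * x ^ 2) := by
    funext x; unfold φ; congr 1; ring
  rw [this]; exact h

lemma φ_deriv (x : ℝ) : HasDerivAt φ (-x * φ x) x := by
  have h : HasDerivAt (fun s : ℝ => -s ^ 2 / 2) (-x) x := by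
    have h0 := ((hasDerivAt_pow 2 x).neg).div_const 2
    refine h0.congr_deriv ?_
    simp
    ring
  exact h.exp.congr_deriv (by simp only [φ]; ring)

lemma sφ_integrable : Integrable (fun s : ℝ => -s * φ s) := by
  have h := (integrable_mul_exp_neg_mul_sq (b := 1/2) (by norm_num)).neg
  have : (fun s : ℝ => -s * φ s) = fun x : ℝ => -(x * Real.exp (-(1/2) * x ^ 2)) := by
    funext x; unfold φ; rw [neg_mul]; congr 2; ring
  rw [this]; exact h

noncomputable def g (x : ℝ) : ℝ := ∫ s in Set.Iic x, φ s

lemma g_pos (x : ℝ) : 0 < g x := by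
  rw [g, setIntegral_pos_iff_support_of_nonneg_ae
    (Filter.Eventually.of_forall fun s => (φ_pos s).le) φ_integrable.integrableOn]
  have hsupp : Function.support φ = Set.univ := by
    ext s; simp [φ, Real.exp_ne_zero]
  rw [hsupp, Set.univ_inter]
  simp [Real.volume_Iic]

lemma g_deriv (x : ℝ) : HasDerivAt g (φ x) x := by
  have key : ∀ y : ℝ, g y = (∫ s in Set.Iic (0:ℝ), φ s) + ∫ s in (0:ℝ)..y, φ s := by
    intro y
    have h0 := intervalIntegral.integral_Iic_sub_Iic (f := φ) (μ := volume) (a := (0:ℝ))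
      (b := y) φ_integrable.integrableOn φ_integrable.integrableOn
    unfold g; linarith
  have h : HasDerivAt (fun y : ℝ => ∫ s in (0:ℝ)..y, φ s) (φ x) x :=
    intervalIntegral.integral_hasDerivAt_right φ_integrable.intervalIntegrable
      φ_cont.stronglyMeasurable.stronglyMeasurableAtFilter φ_cont.continuousAt
  have h2 := h.const_add (∫ s in Set.Iic (0:ℝ), φ s)
  exact h2.congr_of_eventuallyEq (Filter.Eventually.of_forall key)

lemma φ_tendsto : Tendsto φ atBot (nhds 0) := by
  have harg : Tendsto (fun s : ℝ => -s ^ 2 / 2) atBot atBot := by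
    apply tendsto_atBot_mono' atBot _ tendsto_id
    filter_upwards [eventually_le_atBot (-2 : ℝ)] with s hs
    simp only [id_eq]
    nlinarith
  exact Real.tendsto_exp_atBot.comp harg

lemma integral_sφ (x : ℝ) : ∫ s in Set.Iic x, -s * φ s = φ x := by
  have h := MeasureTheory.integral_Iic_of_hasDerivAt_of_tendsto'
    (f := φ) (f' := fun s => -s * φ s) (a := x)
    (fun y _ => φ_deriv y) sφ_integrable.integrableOn φ_tendsto
  simpa using h

lemma key_pos (x : ℝ) : 0 < φ x + x * g x := by
  have heq : φ x + x * g x = ∫ s in Set.Iic x, (x - s) * φ s := by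
    have h1 : ∀ s : ℝ, (x - s) * φ s = x * φ s + (-s * φ s) := by intro s; ring
    rw [show (fun s : ℝ => (x - s) * φ s) = fun s => x * φ s + (-s * φ s) from funext h1]
    rw [MeasureTheory.integral_add ((φ_integrable.integrableOn).const_mul x)
      sφ_integrable.integrableOn]
    rw [MeasureTheory.integral_const_mul, integral_sφ]
    unfold g; ring
  rw [heq]
  rw [setIntegral_pos_iff_support_of_nonneg_ae]
  · have hsub : Set.Iio x ⊆ Function.support (fun s => (x - s) * φ s) ∩ Set.Iic x := by
      intro s hs
      refine ⟨?_, Set.mem_Iic.mpr (le_of_lt (Set.mem_Iio.mp hs))⟩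
      simp only [Function.mem_support]
      have hne : x - s ≠ 0 := sub_ne_zero.mpr (ne_of_gt (Set.mem_Iio.mp hs))
      exact mul_ne_zero hne (ne_of_gt (φ_pos s))
    calc (0:ENNReal) < volume (Set.Iio x) := by simp [Real.volume_Iio]
      _ ≤ _ := measure_mono hsub
  · filter_upwards [MeasureTheory.ae_restrict_mem measurableSet_Iic] with s hs
    exact mul_nonneg (sub_nonneg.mpr hs) (φ_pos s).le
  · refine MeasureTheory.Integrable.integrableOn ?_
    have : (fun s : ℝ => (x - s) * φ s) = fun s => x * φ s + (-s * φ s) := by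
      funext s; ring
    rw [this]
    exact (φ_integrable.const_mul x).add sφ_integrable

lemma F_eq (x : ℝ) : F x = (1 / Real.sqrt (2 * Real.pi)) * g x := rfl

lemma c_pos : 0 < 1 / Real.sqrt (2 * Real.pi) := by
  have : 0 < Real.sqrt (2 * Real.pi) := Real.sqrt_pos.mpr (by positivity)
  positivity

lemma F_pos (x : ℝ) : 0 < F x := by
  rw [F_eq]; exact mul_pos c_pos (g_pos x)

lemma F_deriv (x : ℝ) : HasDerivAt F ((1 / Real.sqrt (2 * Real.pi)) * φ x) x := by
  have := (g_deriv x).const_mul (1 / Real.sqrt (2 * Real.pi))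
  exact this.congr_of_eventuallyEq (Filter.Eventually.of_forall fun y => F_eq y)

lemma f_deriv (x : ℝ) :
    HasDerivAt (fun y : ℝ => -Real.log (F y)) (-(φ x / g x)) x := by
  have h := ((F_deriv x).log (F_pos x).ne').neg
  refine h.congr_deriv ?_
  rw [F_eq]
  field_simp

lemma f_deriv2 (x : ℝ) :
    HasDerivAt (fun y : ℝ => -(φ y / g y)) (φ x * (φ x + x * g x) / (g x) ^ 2) x := by
  have h := ((φ_deriv x).div (g_deriv x) (g_pos x).ne').neg
  refine h.congr_deriv ?_
  field_simp
  ring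

theorem main : StrictConvexOn ℝ Set.univ (fun x : ℝ => -Real.log (F x)) := by
  apply strictConvexOn_univ_of_deriv2_pos
  · exact continuous_iff_continuousAt.mpr fun x =>
      ((Real.continuousAt_log (F_pos x).ne').comp
        (F_deriv x).differentiableAt.continuousAt).neg
  · intro x
    have hd1 : deriv (fun y : ℝ => -Real.log (F y)) = fun y : ℝ => -(φ y / g y) :=
      funext fun y => (f_deriv y).deriv
    have : (deriv^[2] (fun y : ℝ => -Real.log (F y))) x
        = deriv (fun y : ℝ => -(φ y / g y)) x := by
      simp only [Function.iterate_succ, Function.iterate_zero, Function.comp_apply, id_eq]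
      rw [hd1]
    rw [this, (f_deriv2 x).deriv]
    have h1 := φ_pos x
    have h2 := key_pos x
    have h3 := g_pos x
    positivity

end GaussAux

theorem strictConvexOn_neg_log_F :
    StrictConvexOn ℝ Set.univ (fun x : ℝ => -Real.log (F x)) := GaussAux.main
end

section
/- The function x ↦ -ln(1 - F(x)) is strictly convex on ℝ. -/
open Real MeasureTheory Set Filter

namespace AuxGauss

noncomputable def φ (s : ℝ) : ℝ := Real.exp (-s ^ 2 / 2)

lemma φ_eq : φ = fun s : ℝ => Real.exp (-(1/2) * s ^ 2) := by
  funext s; simp [φ]; ring_nf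

lemma φ_pos (s : ℝ) : 0 < φ s := Real.exp_pos _

lemma φ_cont : Continuous φ := by
  rw [φ_eq]; continuity

lemma φ_int : Integrable φ := by
  rw [φ_eq]; exact integrable_exp_neg_mul_sq (by norm_num)

lemma xφ_int : Integrable (fun s => s * φ s) := by
  rw [φ_eq]; exact integrable_mul_exp_neg_mul_sq (by norm_num)

lemma φ_total : (∫ s, φ s) = Real.sqrt (2 * Real.pi) := by
  rw [φ_eq, integral_gaussian]
  norm_num [Real.sqrt_mul_self Real.pi_pos.le, mul_comm]

lemma hasDerivAt_φ (x : ℝ) : HasDerivAt φ (-x * φ x) x := by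
  have h1 : HasDerivAt (fun s : ℝ => -s ^ 2 / 2) (-x) x := by
    have := ((hasDerivAt_pow 2 x).neg).div_const 2
    exact this.congr_deriv (by norm_num; ring)
  have := h1.exp
  unfold φ
  convert this using 1; ring

lemma hasDerivAt_φ' (x : ℝ) : HasDerivAt (fun s => φ s) (-x * φ x) x := hasDerivAt_φ x

lemma ioi_integral_pos {g : ℝ → ℝ} (hg : ∀ s, 0 < g s) (hgi : Integrable g) (x : ℝ) :
    0 < ∫ s in Set.Ioi x, g s := by
  rw [setIntegral_pos_iff_support_of_nonneg_ae]
  · have : Function.support g ∩ Set.Ioi x = Set.Ioi x := by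
      rw [Set.inter_eq_right]
      intro s _; exact (hg s).ne'
    rw [this]
    simp [Real.volume_Ioi]
  · exact Filter.Eventually.of_forall fun s => (hg s).le
  · exact hgi.integrableOn

lemma key_integral (x : ℝ) : (∫ s in Set.Ioi x, s * φ s) = φ x := by
  have h := integral_Ioi_of_hasDerivAt_of_tendsto (f := fun s => -φ s)
    (f' := fun s => s * φ s) (a := x) (m := 0)
    (((hasDerivAt_φ x).neg).continuousAt.continuousWithinAt)
    (fun y _ => by have := (hasDerivAt_φ y).neg; simp only [neg_mul, neg_neg] at this; exact this)
    (xφ_int.integrableOn)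
    ?_
  · simpa using h
  · have h2 : Tendsto (fun s : ℝ => -s ^ 2 / 2) atTop atBot := by
      apply Filter.Tendsto.atBot_div_const (by norm_num)
      exact tendsto_neg_atBot_iff.mpr (tendsto_pow_atTop (by norm_num))
    exact (Real.tendsto_exp_atBot.comp h2).neg.congr (fun s => rfl) |>.trans_eq (by norm_num)


noncomputable def c : ℝ := 1 / Real.sqrt (2 * Real.pi)

lemma hc : 0 < c := by
  have : 0 < Real.sqrt (2 * Real.pi) := Real.sqrt_pos.mpr (by positivity)
  simp [c]; positivity

lemma hF (x : ℝ) : HasDerivAt F (c * φ x) x := by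
  have hrepr : F = fun z => c * ((∫ s in Set.Iic (0:ℝ), φ s) + ∫ s in (0:ℝ)..z, φ s) := by
    funext z
    rw [show F z = c * ∫ s in Set.Iic z, φ s from rfl]
    congr 1
    rw [← intervalIntegral.integral_Iic_sub_Iic φ_int.integrableOn φ_int.integrableOn]
    ring
  rw [hrepr]
  exact ((hasDerivAt_const x _).add (intervalIntegral.integral_hasDerivAt_right
    (φ_int.intervalIntegrable) (φ_cont.stronglyMeasurable.stronglyMeasurableAtFilter)
    φ_cont.continuousAt)).const_mul c |>.congr_deriv (by ring)

lemma hsub (x : ℝ) : 1 - F x = c * ∫ s in Set.Ioi x, φ s := by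
  have h1 : (∫ s in Set.Iic x, φ s) + ∫ s in Set.Ioi x, φ s = Real.sqrt (2 * Real.pi) := by
    rw [intervalIntegral.integral_Iic_add_Ioi φ_int.integrableOn φ_int.integrableOn, φ_total]
  have hs : Real.sqrt (2 * Real.pi) ≠ 0 := (Real.sqrt_pos.mpr (by positivity)).ne'
  have hFx : F x = c * ∫ s in Set.Iic x, φ s := rfl
  have hcS : c * Real.sqrt (2 * Real.pi) = 1 := one_div_mul_cancel hs
  rw [hFx, ← hcS, ← mul_sub]
  congr 1
  linarith

lemma hpos (x : ℝ) : 0 < 1 - F x := by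
  rw [hsub]
  exact mul_pos hc (ioi_integral_pos φ_pos φ_int x)

lemma key (x : ℝ) : x * ∫ s in Set.Ioi x, φ s < φ x := by
  have h1 : 0 < ∫ s in Set.Ioi x, (s * φ s - x * φ s) := by
    rw [setIntegral_pos_iff_support_of_nonneg_ae]
    · have hsup : Set.Ioi x ⊆ Function.support (fun s => s * φ s - x * φ s) := by
        intro s hs
        have : 0 < (s - x) * φ s := mul_pos (sub_pos.mpr hs) (φ_pos s)
        simp only [Function.mem_support]
        intro he; rw [show s * φ s - x * φ s = (s - x) * φ s by ring] at he
        exact this.ne' he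
      have : 0 < volume (Set.Ioi x) := by simp [Real.volume_Ioi]
      exact this.trans_le (measure_mono (Set.subset_inter hsup Set.Subset.rfl))
    · filter_upwards [ae_restrict_mem measurableSet_Ioi] with s hs
      have : 0 ≤ (s - x) * φ s := mul_nonneg (sub_nonneg.mpr (le_of_lt hs)) (φ_pos s).le
      exact le_of_le_of_eq this (by ring)
    · exact (xφ_int.sub (φ_int.const_mul x)).integrableOn
  rw [integral_sub xφ_int.integrableOn (φ_int.const_mul x).integrableOn,
    key_integral, MeasureTheory.integral_const_mul] at h1
  linarith

lemma key2 (x : ℝ) : x * (1 - F x) < c * φ x := by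
  rw [hsub]
  calc x * (c * ∫ s in Set.Ioi x, φ s) = c * (x * ∫ s in Set.Ioi x, φ s) := by ring
  _ < c * φ x := by exact mul_lt_mul_of_pos_left (key x) hc

lemma hderiv1 (x : ℝ) :
    HasDerivAt (fun x => -Real.log (1 - F x)) (c * φ x / (1 - F x)) x := by
  have h := (((hasDerivAt_const x (1:ℝ)).sub (hF x)).log (hpos x).ne').neg
  exact h.congr_deriv (by simp only [Pi.sub_apply]; ring)

lemma hD1 : deriv (fun x => -Real.log (1 - F x)) = fun x => c * φ x / (1 - F x) :=
  funext fun x => (hderiv1 x).deriv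

lemma hderiv2 (x : ℝ) :
    HasDerivAt (fun x => c * φ x / (1 - F x))
      ((c * (-x * φ x) * (1 - F x) - c * φ x * (0 - c * φ x)) / (1 - F x) ^ 2) x :=
  ((hasDerivAt_φ x).const_mul c).div ((hasDerivAt_const x (1:ℝ)).sub (hF x)) (hpos x).ne'

lemma second_pos (x : ℝ) :
    0 < (c * (-x * φ x) * (1 - F x) - c * φ x * (0 - c * φ x)) / (1 - F x) ^ 2 := by
  apply div_pos
  · nlinarith [mul_pos (mul_pos hc (φ_pos x)) (sub_pos.mpr (key2 x))]
  · exact pow_pos (hpos x) 2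

end AuxGauss

theorem strictConvexOn_neg_log_one_sub_F :
    StrictConvexOn ℝ Set.univ (fun x : ℝ => -Real.log (1 - F x)) := by
  apply strictConvexOn_of_deriv2_pos convex_univ
  · exact fun x _ => (AuxGauss.hderiv1 x).continuousAt.continuousWithinAt
  · intro x _
    have h2 : deriv^[2] (fun x : ℝ => -Real.log (1 - F x))
        = deriv (deriv (fun x : ℝ => -Real.log (1 - F x))) := rfl
    rw [h2, AuxGauss.hD1, (AuxGauss.hderiv2 x).deriv]
    exact AuxGauss.second_pos x
end

section
/- With the setup of the entropy E on Ω, if E(ξ̄) ≤ c then for each index k with aₖ > 0 one has F((ξ_{k+1}-vₖ)/aₖ) - F((ξₖ-vₖ)/aₖ) ≥ exp(-c/m) where m = min over k with aₖ > 0 of aₖ²(u_{k+1}-uₖ) > 0, and consequently ξ_{k+1} - ξₖ ≥ aₖ·exp(-c/m) for 1 ≤ k ≤ d-1. -/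
open Real MeasureTheory Set


lemma gauss_eq : (fun s : ℝ => Real.exp (-s ^ 2 / 2)) = fun s => Real.exp (-(1/2) * s ^ 2) := by
  funext s; ring_nf

lemma gauss_pos (s : ℝ) : 0 < Real.exp (-s ^ 2 / 2) := Real.exp_pos _

lemma sqrt_two_pi_pos : 0 < Real.sqrt (2 * Real.pi) :=
  Real.sqrt_pos.2 (by positivity)

lemma one_le_sqrt_two_pi : 1 ≤ Real.sqrt (2 * Real.pi) := by
  rw [show (1:ℝ) = Real.sqrt 1 by simp]
  exact Real.sqrt_le_sqrt (by nlinarith [Real.pi_gt_three])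

lemma F_sub_s13 (x y : ℝ) : F y - F x
    = (1 / Real.sqrt (2 * Real.pi)) * ∫ s in x..y, Real.exp (-s ^ 2 / 2) := by
  rw [F, F, ← mul_sub, intervalIntegral.integral_Iic_sub_Iic gauss_integrable.integrableOn
    gauss_integrable.integrableOn]

lemma F_strictMono : StrictMono F := by
  intro x y hxy
  have h : 0 < F y - F x := by
    rw [F_sub_s13]
    exact mul_pos (by positivity)
      (intervalIntegral.intervalIntegral_pos_of_pos gauss_integrable.intervalIntegrable gauss_pos hxy)
  linarith

lemma F_pos (z : ℝ) : 0 < F z := by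
  rw [F]
  apply mul_pos (by positivity)
  rw [setIntegral_pos_iff_support_of_nonneg_ae
    (Filter.Eventually.of_forall fun s => (gauss_pos s).le) gauss_integrable.integrableOn]
  have : Function.support (fun s : ℝ => Real.exp (-s ^ 2 / 2)) ∩ Set.Iic z = Set.Iic z := by
    rw [Set.inter_eq_right]
    intro s _
    exact (gauss_pos s).ne'
  rw [this, Real.volume_Iic]
  simp

lemma F_lt_one (z : ℝ) : F z < 1 := by
  have htot : ∫ s : ℝ, Real.exp (-s ^ 2 / 2) = Real.sqrt (2 * Real.pi) := by
    rw [gauss_eq, integral_gaussian]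
    norm_num
    exact mul_comm _ _
  have hIoi : 0 < ∫ s in Set.Ioi z, Real.exp (-s ^ 2 / 2) := by
    rw [setIntegral_pos_iff_support_of_nonneg_ae
      (Filter.Eventually.of_forall fun s => (gauss_pos s).le) gauss_integrable.integrableOn]
    have : Function.support (fun s : ℝ => Real.exp (-s ^ 2 / 2)) ∩ Set.Ioi z = Set.Ioi z := by
      rw [Set.inter_eq_right]; intro s _; exact (gauss_pos s).ne'
    rw [this, Real.volume_Ioi]
    simp
  have hsplit : (∫ s in Set.Iic z, Real.exp (-s ^ 2 / 2))
      + ∫ s in Set.Ioi z, Real.exp (-s ^ 2 / 2) = Real.sqrt (2 * Real.pi) := by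
    rw [← htot]
    exact intervalIntegral.integral_Iic_add_Ioi gauss_integrable.integrableOn gauss_integrable.integrableOn
  have h1 : (∫ s in Set.Iic z, Real.exp (-s ^ 2 / 2)) < Real.sqrt (2 * Real.pi) := by linarith
  rw [F]
  calc (1 / Real.sqrt (2 * Real.pi)) * ∫ s in Set.Iic z, Real.exp (-s ^ 2 / 2)
      < (1 / Real.sqrt (2 * Real.pi)) * Real.sqrt (2 * Real.pi) := by
        apply mul_lt_mul_of_pos_left h1 (by positivity)
    _ = 1 := by field_simp

lemma F_lipschitz {x y : ℝ} (hxy : x ≤ y) : F y - F x ≤ y - x := by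
  rw [F_sub_s13, intervalIntegral.integral_of_le hxy]
  have h1 : (∫ s in Set.Ioc x y, Real.exp (-s ^ 2 / 2)) ≤ ∫ _ in Set.Ioc x y, (1:ℝ) := by
    apply setIntegral_mono_on gauss_integrable.integrableOn
      (integrableOn_const (by rw [Real.volume_Ioc]; exact ENNReal.ofReal_ne_top))
      measurableSet_Ioc
    intro s _
    rw [Real.exp_le_one_iff]
    nlinarith [sq_nonneg s]
  have h2 : (∫ _ in Set.Ioc x y, (1:ℝ)) = y - x := by
    rw [setIntegral_const, Real.volume_real_Ioc_of_le hxy, smul_eq_mul, mul_one]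
  have h3 : 0 ≤ ∫ s in Set.Ioc x y, Real.exp (-s ^ 2 / 2) :=
    setIntegral_nonneg measurableSet_Ioc fun s _ => (gauss_pos s).le
  have h4 : 1 / Real.sqrt (2 * Real.pi) ≤ 1 :=
    (div_le_one sqrt_two_pi_pos).2 one_le_sqrt_two_pi
  calc (1 / Real.sqrt (2 * Real.pi)) * ∫ s in Set.Ioc x y, Real.exp (-s ^ 2 / 2)
      ≤ 1 * ∫ s in Set.Ioc x y, Real.exp (-s ^ 2 / 2) := mul_le_mul_of_nonneg_right h4 h3
    _ = ∫ s in Set.Ioc x y, Real.exp (-s ^ 2 / 2) := one_mul _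
    _ ≤ y - x := by rw [← h2]; exact h1

/-- Extension of `F` to `EReal` with the conventions `F(-∞) = 0`, `F(+∞) = 1`. -/
noncomputable def Fe (e : EReal) : ℝ :=
  if e = ⊥ then 0 else if e = ⊤ then 1 else F e.toReal

lemma Fe_coe (r : ℝ) : Fe r = F r := by
  simp [Fe, EReal.coe_ne_bot, EReal.coe_ne_top]

@[simp] lemma Fe_bot : Fe ⊥ = 0 := by simp [Fe]
@[simp] lemma Fe_top : Fe ⊤ = 1 := by simp [Fe]

lemma Fe_nonneg (e : EReal) : 0 ≤ Fe e := by
  induction e using EReal.rec with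
  | bot => simp
  | coe r => rw [Fe_coe]; exact (F_pos r).le
  | top => simp

lemma Fe_le_one (e : EReal) : Fe e ≤ 1 := by
  induction e using EReal.rec with
  | bot => simp
  | coe r => rw [Fe_coe]; exact (F_lt_one r).le
  | top => simp

lemma Fe_strictMono : StrictMono Fe := by
  intro e₁ e₂ h
  induction e₁ using EReal.rec with
  | bot =>
    induction e₂ using EReal.rec with
    | bot => exact absurd h (lt_irrefl _)
    | coe r => rw [Fe_bot, Fe_coe]; exact F_pos r
    | top => rw [Fe_bot, Fe_top]; norm_num
  | coe r =>
    induction e₂ using EReal.rec with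
    | bot => exact absurd h (by simp)
    | coe s => rw [Fe_coe, Fe_coe]; exact F_strictMono (EReal.coe_lt_coe_iff.1 h)
    | top => rw [Fe_coe, Fe_top]; exact F_lt_one r
  | top => exact absurd h (by simp)

lemma Fe_mono : Monotone Fe := Fe_strictMono.monotone

/-- The extended vector of discontinuity speeds: `Ξ 0 = -∞`, `Ξ k = ξₖ` for
`1 ≤ k ≤ d`, and `Ξ k = +∞` for `k > d`. -/
noncomputable def Xi (d : ℕ) (ξ : Fin d → ℝ) (k : ℕ) : EReal :=
  if h : 1 ≤ k ∧ k ≤ d then ((ξ ⟨k - 1, by omega⟩ : ℝ) : EReal)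
  else if k = 0 then ⊥ else ⊤

/-- The entropy function
`E(ξ̄) = -Σ_{k : aₖ>0} aₖ²(u_{k+1}-uₖ) ln(F((ξ_{k+1}-vₖ)/aₖ) - F((ξₖ-vₖ)/aₖ))
       + (1/2) Σ_{k : aₖ=0} (u_{k+1}-uₖ)(ξ_{k+1}-vₖ)²`. -/
noncomputable def entropyE (n : ℕ) (u v a : ℕ → ℝ) (d : ℕ) (ξ : Fin d → ℝ) : ℝ :=
  ∑ k ∈ Finset.range n,
    if 0 < a k then
      -((a k) ^ 2 * (u (k + 1) - u k) *
        Real.log (Fe ((Xi d ξ (k + 1) - (v k : EReal)) / (a k : EReal)) -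
                  Fe ((Xi d ξ k - (v k : EReal)) / (a k : EReal))))
    else (1 / 2) * (u (k + 1) - u k) * ((Xi d ξ (k + 1)).toReal - v k) ^ 2

/-- The cone `Ω`: `ξ₁ ≤ ⋯ ≤ ξ_d`, with strict inequality `ξₖ < ξ_{k+1}` whenever
`aₖ > 0` (in the extended indexing including `ξ₀ = -∞`, `ξ_{d+1} = +∞`). -/
def OmegaCone (n : ℕ) (a : ℕ → ℝ) (d : ℕ) : Set (Fin d → ℝ) :=
  {ξ | ∀ k < n, Xi d ξ k ≤ Xi d ξ (k + 1) ∧ (0 < a k → Xi d ξ k < Xi d ξ (k + 1))}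

theorem entropyE_sublevel_bounds (n : ℕ) (hn : 0 < n) (u v a : ℕ → ℝ)
    (hu : ∀ k < n, u k < u (k + 1)) (ha : ∀ k, 0 ≤ a k)
    (hne : ((Finset.range n).filter fun k => 0 < a k).Nonempty)
    (d : ℕ) (hd : d = if 0 < a (n - 1) then n - 1 else n)
    (c : ℝ) (hc : 0 ≤ c) (m : ℝ)
    (hm : m = ((Finset.range n).filter fun k => 0 < a k).inf' hne
        (fun k => (a k) ^ 2 * (u (k + 1) - u k)))
    (ξ : Fin d → ℝ) (hξ : ξ ∈ OmegaCone n a d)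
    (hE : entropyE n u v a d ξ ≤ c) :
    0 < m ∧
    (∀ k < n, 0 < a k →
      Real.exp (-c / m) ≤
        Fe ((Xi d ξ (k + 1) - (v k : EReal)) / (a k : EReal)) -
        Fe ((Xi d ξ k - (v k : EReal)) / (a k : EReal))) ∧
    (∀ k, 1 ≤ k → k ≤ d - 1 →
      a k * Real.exp (-c / m) ≤ (Xi d ξ (k + 1)).toReal - (Xi d ξ k).toReal) := by
  rw [entropyE] at hE
  have hdn : d ≤ n := by rw [hd]; split <;> omega
  -- monotonicity of the arguments of Fe
  have hABle : ∀ k < n, (Xi d ξ k - (v k : EReal)) / (a k : EReal) ≤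
      (Xi d ξ (k + 1) - (v k : EReal)) / (a k : EReal) := by
    intro k hk
    exact EReal.div_le_div_right_of_nonneg (EReal.coe_nonneg.2 (ha k))
      (EReal.sub_le_sub (hξ k hk).1 le_rfl)
  have hABlt : ∀ k < n, 0 < a k → (Xi d ξ k - (v k : EReal)) / (a k : EReal) <
      (Xi d ξ (k + 1) - (v k : EReal)) / (a k : EReal) := by
    intro k hk hak
    apply EReal.div_lt_div_right_of_pos (EReal.coe_pos.2 hak) (EReal.coe_ne_top _)
    exact EReal.sub_lt_sub_of_lt_of_le ((hξ k hk).2 hak) le_rfl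
      (EReal.coe_ne_bot _) (EReal.coe_ne_top _)
  -- positivity of m
  have hm_pos : 0 < m := by
    rw [hm, Finset.lt_inf'_iff]
    intro k hk
    rw [Finset.mem_filter, Finset.mem_range] at hk
    exact mul_pos (pow_pos hk.2 2) (sub_pos.2 (hu k hk.1))
  -- each term of the entropy is nonnegative
  have hterm : ∀ k ∈ Finset.range n,
      (0:ℝ) ≤ if 0 < a k then
        -((a k) ^ 2 * (u (k + 1) - u k) *
          Real.log (Fe ((Xi d ξ (k + 1) - (v k : EReal)) / (a k : EReal)) -
                    Fe ((Xi d ξ k - (v k : EReal)) / (a k : EReal))))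
      else (1 / 2) * (u (k + 1) - u k) * ((Xi d ξ (k + 1)).toReal - v k) ^ 2 := by
    intro k hk
    rw [Finset.mem_range] at hk
    by_cases hak : 0 < a k
    · rw [if_pos hak]
      have hD1 : Fe ((Xi d ξ (k + 1) - (v k : EReal)) / (a k : EReal)) -
          Fe ((Xi d ξ k - (v k : EReal)) / (a k : EReal)) ≤ 1 := by
        linarith [Fe_le_one ((Xi d ξ (k + 1) - (v k : EReal)) / (a k : EReal)),
          Fe_nonneg ((Xi d ξ k - (v k : EReal)) / (a k : EReal))]
      have hD0 : (0:ℝ) ≤ Fe ((Xi d ξ (k + 1) - (v k : EReal)) / (a k : EReal)) -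
          Fe ((Xi d ξ k - (v k : EReal)) / (a k : EReal)) :=
        sub_nonneg.2 (Fe_mono (hABle k hk))
      have hlog := Real.log_nonpos hD0 hD1
      have hcoef : 0 < (a k) ^ 2 * (u (k + 1) - u k) :=
        mul_pos (pow_pos hak 2) (sub_pos.2 (hu k hk))
      nlinarith
    · rw [if_neg hak]
      have h1 := sub_pos.2 (hu k hk)
      exact mul_nonneg (mul_nonneg (by norm_num) h1.le) (sq_nonneg _)
  -- the key lower bound on each F-difference
  have key : ∀ k < n, 0 < a k →
      Real.exp (-c / m) ≤
        Fe ((Xi d ξ (k + 1) - (v k : EReal)) / (a k : EReal)) -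
        Fe ((Xi d ξ k - (v k : EReal)) / (a k : EReal)) := by
    intro k hk hak
    set D := Fe ((Xi d ξ (k + 1) - (v k : EReal)) / (a k : EReal)) -
        Fe ((Xi d ξ k - (v k : EReal)) / (a k : EReal)) with hDdef
    have hDpos : 0 < D := sub_pos.2 (Fe_strictMono (hABlt k hk hak))
    have hsingle : -((a k) ^ 2 * (u (k + 1) - u k) * Real.log D) ≤ c := by
      have h0 := Finset.single_le_sum hterm (Finset.mem_range.2 hk)
      rw [if_pos hak] at h0
      exact h0.trans hE
    have hcoef : 0 < (a k) ^ 2 * (u (k + 1) - u k) :=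
      mul_pos (pow_pos hak 2) (sub_pos.2 (hu k hk))
    have hmle : m ≤ (a k) ^ 2 * (u (k + 1) - u k) := by
      rw [hm]
      exact Finset.inf'_le _ (Finset.mem_filter.2 ⟨Finset.mem_range.2 hk, hak⟩)
    have h1 : -c ≤ (a k) ^ 2 * (u (k + 1) - u k) * Real.log D := by linarith
    have h2 : -c / m ≤ Real.log D := by
      rw [div_le_iff₀ hm_pos]
      rcases le_or_gt 0 (Real.log D) with hl | hl
      · nlinarith
      · nlinarith
    calc Real.exp (-c / m) ≤ Real.exp (Real.log D) := Real.exp_le_exp.2 h2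
      _ = D := Real.exp_log hDpos
  refine ⟨hm_pos, key, ?_⟩
  intro k hk1 hk2
  have hkn : k < n := by omega
  have hXik : Xi d ξ k = ((ξ ⟨k - 1, by omega⟩ : ℝ) : EReal) := by
    rw [Xi, dif_pos ⟨hk1, by omega⟩]
  have hXik1 : Xi d ξ (k + 1) = ((ξ ⟨k + 1 - 1, by omega⟩ : ℝ) : EReal) := by
    rw [Xi, dif_pos ⟨by omega, by omega⟩]
  set x := ξ ⟨k - 1, by omega⟩ with hx
  set y := ξ ⟨k + 1 - 1, by omega⟩ with hy
  have hxy : x ≤ y := by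
    have h0 := (hξ k hkn).1
    rw [hXik, hXik1, EReal.coe_le_coe_iff] at h0
    exact h0
  rw [hXik, hXik1, EReal.toReal_coe, EReal.toReal_coe]
  by_cases hak : 0 < a k
  · have h2 := key k hkn hak
    rw [hXik, hXik1, ← EReal.coe_sub, ← EReal.coe_sub, ← EReal.coe_div, ← EReal.coe_div,
      Fe_coe, Fe_coe] at h2
    have hlip : F ((y - v k) / a k) - F ((x - v k) / a k) ≤
        (y - v k) / a k - (x - v k) / a k :=
      F_lipschitz ((div_le_div_iff_of_pos_right hak).2 (by linarith))
    have h5 := h2.trans hlip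
    have heq : (y - v k) / a k - (x - v k) / a k = (y - x) / a k := by
      field_simp
      ring
    rw [heq] at h5
    have h6 := (le_div_iff₀ hak).1 h5
    linarith
  · have ha0 : a k = 0 := le_antisymm (not_lt.1 hak) (ha k)
    rw [ha0, zero_mul]
    linarith
end
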